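/- Let R be an integral domain and let σ, τ be R-algebra automorphisms of R[x,y] with σ(y) = τ(y) =: Y. Then there exist a unit u ∈ R* and a polynomial r ∈ R[y] such that σ(x) = u·τ(x) + r(Y). -/

import Mathlib

open Polynomial

/-- An `A`-algebra automorphism of `A[X]` over a domain `A` sends `X` to `a·X + b`
with `a` a unit. -/
lemma aux_key {A : Type*} [CommRing A] [IsDomain A]
    (ψ : Polynomial A ≃ₐ[A] Polynomial A) :
    ∃ a b : A, IsUnit a ∧ ψ Polynomial.X = Polynomial.C a * Polynomial.X + Polynomial.C b := by
  set p := ψ Polynomial.X with hp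
  set q := ψ.symm Polynomial.X with hq
  have hψ : ∀ f, ψ f = Polynomial.aeval p f := by
    intro f
    have : ψ.toAlgHom = Polynomial.aeval p := Polynomial.algHom_ext (by simp [hp])
    exact congrFun (congrArg DFunLike.coe this) f
  have hqp : q.comp p = Polynomial.X := by
    have := hψ q
    rw [hq, AlgEquiv.apply_symm_apply] at this
    rw [Polynomial.comp_eq_aeval, ← this]
  have hdeg : q.natDegree * p.natDegree = 1 := by
    have := congrArg Polynomial.natDegree hqp
    rwa [Polynomial.natDegree_comp, Polynomial.natDegree_X] at this
  have hpd : p.natDegree = 1 := Nat.eq_one_of_mul_eq_one_left hdeg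
  have hqd : q.natDegree = 1 := Nat.eq_one_of_mul_eq_one_right hdeg
  have hpe : p = Polynomial.C (p.coeff 1) * Polynomial.X + Polynomial.C (p.coeff 0) :=
    Polynomial.eq_X_add_C_of_natDegree_le_one hpd.le
  have hqe : q = Polynomial.C (q.coeff 1) * Polynomial.X + Polynomial.C (q.coeff 0) :=
    Polynomial.eq_X_add_C_of_natDegree_le_one hqd.le
  have hcomp : Polynomial.C (q.coeff 1) * p + Polynomial.C (q.coeff 0) = Polynomial.X := by
    rw [← hqp]
    conv_rhs => rw [hqe]
    simp [Polynomial.add_comp, Polynomial.mul_comp]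
  have hmul : q.coeff 1 * p.coeff 1 = 1 := by
    have := congrArg (fun f => Polynomial.coeff f 1) hcomp
    simpa [Polynomial.coeff_C] using this
  exact ⟨p.coeff 1, p.coeff 0, IsUnit.of_mul_eq_one _ (by rw [mul_comm] at hmul; exact hmul),
    hpe⟩

/-- Over a domain, two automorphisms of `R[x,y]` with the same second component differ
by a triangular automorphism: `σ(x) = u·τ(x) + r(Y)` with `u ∈ R*`, `r ∈ R[y]`,
`Y = σ(y) = τ(y)`. -/
theorem automorphisms_with_same_component (R : Type*) [CommRing R] [IsDomain R]
    (σ τ : MvPolynomial (Fin 2) R ≃ₐ[R] MvPolynomial (Fin 2) R)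
    (h : σ (MvPolynomial.X 1) = τ (MvPolynomial.X 1)) :
    ∃ (u : Rˣ) (r : Polynomial R),
      σ (MvPolynomial.X 0) = MvPolynomial.C (u : R) * τ (MvPolynomial.X 0) +
        Polynomial.aeval (σ (MvPolynomial.X 1)) r := by
  classical
  -- the equivalence `R[x,y] ≃ (R[y])[x]`
  let E : MvPolynomial (Fin 2) R ≃ₐ[R] Polynomial (Polynomial R) :=
    (MvPolynomial.finSuccEquiv R 1).trans
      (Polynomial.mapAlgEquiv
        ((MvPolynomial.finSuccEquiv R 0).trans
          (Polynomial.mapAlgEquiv (MvPolynomial.isEmptyAlgEquiv R (Fin 0)))))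
  have hE0 : E (MvPolynomial.X 0) = Polynomial.X := by
    simp [E, MvPolynomial.finSuccEquiv_X_zero, Polynomial.coe_mapAlgEquiv]
  have hfs : (MvPolynomial.finSuccEquiv R 1) (MvPolynomial.X 1) =
      Polynomial.C (MvPolynomial.X 0) := by
    have h2 := MvPolynomial.finSuccEquiv_X_succ (R := R) (n := 1) (j := 0)
    simpa using h2
  have hE1 : E (MvPolynomial.X 1) = Polynomial.C Polynomial.X := by
    simp [E, hfs, Polynomial.coe_mapAlgEquiv, MvPolynomial.finSuccEquiv_X_zero]
  -- the composite automorphism fixing `y`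
  let φ : MvPolynomial (Fin 2) R ≃ₐ[R] MvPolynomial (Fin 2) R := σ.trans τ.symm
  have hφ1 : φ (MvPolynomial.X 1) = MvPolynomial.X 1 := by
    simp [φ, h]
  -- conjugate to an automorphism of `(R[y])[x]`
  let ψ₀ : Polynomial (Polynomial R) ≃ₐ[R] Polynomial (Polynomial R) :=
    E.symm.trans (φ.trans E)
  have hψ₀C : ∀ a : Polynomial R, ψ₀ (Polynomial.C a) = Polynomial.C a := by
    have : ψ₀.toAlgHom.comp (Polynomial.CAlgHom (A := Polynomial R)) =
        Polynomial.CAlgHom := by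
      apply Polynomial.algHom_ext
      show ψ₀ (Polynomial.C Polynomial.X) = Polynomial.C Polynomial.X
      have : E.symm (Polynomial.C Polynomial.X) = MvPolynomial.X 1 := by
        rw [← hE1, AlgEquiv.symm_apply_apply]
      simp only [ψ₀, AlgEquiv.trans_apply, this, hφ1, hE1]
    intro a
    exact congrFun (congrArg DFunLike.coe this) a
  let ψ : Polynomial (Polynomial R) ≃ₐ[Polynomial R] Polynomial (Polynomial R) :=
    AlgEquiv.ofRingEquiv (f := ψ₀.toRingEquiv) (fun a => hψ₀C a)
  obtain ⟨a, b, ha, hX⟩ := aux_key ψ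
  obtain ⟨u0, hu0, hu0a⟩ := Polynomial.isUnit_iff.mp ha
  obtain ⟨u, hu⟩ := hu0
  -- translate back
  have hψX : ψ₀ Polynomial.X = Polynomial.C a * Polynomial.X + Polynomial.C b := hX
  have hφ0 : φ (MvPolynomial.X 0) =
      MvPolynomial.C (u : R) * MvPolynomial.X 0 +
        Polynomial.aeval (MvPolynomial.X 1) b := by
    have h1 : φ (MvPolynomial.X 0) = E.symm (ψ₀ (E (MvPolynomial.X 0))) := by
      simp [ψ₀]
    rw [h1, hE0, hψX]
    have hC : ∀ c : Polynomial R,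
        E.symm (Polynomial.C c) = Polynomial.aeval (MvPolynomial.X 1) c := by
      have : (E.symm.toAlgHom.comp (Polynomial.CAlgHom (A := Polynomial R)) :
          Polynomial R →ₐ[R] MvPolynomial (Fin 2) R) =
          Polynomial.aeval (MvPolynomial.X 1) := by
        apply Polynomial.algHom_ext
        show E.symm (Polynomial.C Polynomial.X) = _
        rw [← hE1, AlgEquiv.symm_apply_apply]
        simp
      intro c
      exact congrFun (congrArg DFunLike.coe this) c
    have hEX : E.symm Polynomial.X = MvPolynomial.X 0 := by
      rw [← hE0, AlgEquiv.symm_apply_apply]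
    rw [map_add, map_mul, hEX, hC, hC]
    rw [← hu0a, ← hu]
    congr 1
    rw [Polynomial.aeval_C]
    rfl
  refine ⟨u, b, ?_⟩
  have hσ0 : σ (MvPolynomial.X 0) = τ (φ (MvPolynomial.X 0)) := by
    simp [φ]
  rw [hσ0, hφ0, map_add, map_mul]
  congr 1
  · congr 1
    rw [show (MvPolynomial.C ((u : R)) : MvPolynomial (Fin 2) R) =
        algebraMap R (MvPolynomial (Fin 2) R) (u : R) from rfl, AlgEquiv.commutes]
  · rw [h]
    exact (Polynomial.aeval_algHom_apply
      (τ : MvPolynomial (Fin 2) R →ₐ[R] MvPolynomial (Fin 2) R) (MvPolynomial.X 1) b).symm
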